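/- Let G₁ and G₂ be torsion-free groups, G = G₁ * G₂, and n a positive integer. Let φ be an automorphism of G that stabilizes the factor G₁, and let φ₁ be its restriction to G₁. If the automorphism of G/Gⁿ induced by φ has finite order, then the automorphism of G₁/G₁ⁿ induced by φ₁ has finite order. -/

import Mathlib

open scoped Monoid.Coprod

/-- For a group `K`, the subgroup generated by all `n`-th powers of elements of `K`. -/
def powSubgroup (K : Type*) [Group K] (n : ℕ) : Subgroup K :=
  Subgroup.closure {x : K | ∃ k : K, x = k ^ n}

instance powSubgroup_normal (K : Type*) [Group K] (n : ℕ) : (powSubgroup K n).Normal := by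
  constructor
  intro x hx g
  have h : Subgroup.map (MulAut.conj g).toMonoidHom (powSubgroup K n) ≤ powSubgroup K n := by
    rw [powSubgroup, MonoidHom.map_closure]
    apply Subgroup.closure_mono
    rintro _ ⟨_, ⟨y, rfl⟩, rfl⟩
    exact ⟨MulAut.conj g y, by simp⟩
  simpa using h ⟨x, hx, rfl⟩

/-- A monoid is torsion-free if no element other than `1` has finite order
(the definition `Monoid.IsTorsionFree` of the older Mathlib, since removed). -/
def Monoid.IsTorsionFree (G : Type*) [Monoid G] : Prop :=
  ∀ g : G, g ≠ 1 → ¬IsOfFinOrder g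

lemma powSubgroup_map_le {K L : Type*} [Group K] [Group L] (f : K →* L) (n : ℕ) :
    Subgroup.map f (powSubgroup K n) ≤ powSubgroup L n := by
  rw [powSubgroup, MonoidHom.map_closure]
  apply Subgroup.closure_mono
  rintro _ ⟨_, ⟨y, rfl⟩, rfl⟩
  exact ⟨f y, by simp⟩

/-- If an automorphism `φ` of `G = G₁ ∗ G₂` stabilizes the factor `G₁` (with restriction
`φ₁`) and the automorphism of `G/Gⁿ` induced by `φ` has finite order (its `m`-th power is
trivial on the quotient for some `m > 0`), then the automorphism of `G₁/G₁ⁿ` induced by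
`φ₁` has finite order. -/
theorem stmt_3 {G₁ G₂ : Type*} [Group G₁] [Group G₂]
    (h₁ : Monoid.IsTorsionFree G₁) (h₂ : Monoid.IsTorsionFree G₂)
    (n : ℕ) (hn : 0 < n)
    (φ : MulAut (G₁ ∗ G₂)) (φ₁ : MulAut G₁)
    (hstab : Subgroup.map φ.toMonoidHom (Monoid.Coprod.inl : G₁ →* G₁ ∗ G₂).range
      = (Monoid.Coprod.inl : G₁ →* G₁ ∗ G₂).range)
    (hres : ∀ x : G₁, φ ((Monoid.Coprod.inl : G₁ →* G₁ ∗ G₂) x)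
      = (Monoid.Coprod.inl : G₁ →* G₁ ∗ G₂) (φ₁ x))
    (hfin : ∃ m : ℕ, 0 < m ∧ ∀ g : G₁ ∗ G₂, (φ ^ m) g * g⁻¹ ∈ powSubgroup (G₁ ∗ G₂) n) :
    ∃ m : ℕ, 0 < m ∧ ∀ x : G₁, (φ₁ ^ m) x * x⁻¹ ∈ powSubgroup G₁ n := by
  obtain ⟨m, hm, hfin⟩ := hfin
  refine ⟨m, hm, fun x => ?_⟩
  have key : ∀ (k : ℕ) (x : G₁), (φ ^ k) ((Monoid.Coprod.inl : G₁ →* G₁ ∗ G₂) x)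
      = (Monoid.Coprod.inl : G₁ →* G₁ ∗ G₂) ((φ₁ ^ k) x) := by
    intro k
    induction k with
    | zero => simp
    | succ k ih =>
      intro x
      rw [pow_succ, pow_succ]
      simp only [MulAut.mul_apply]
      rw [hres, ih]
  have h := hfin ((Monoid.Coprod.inl : G₁ →* G₁ ∗ G₂) x)
  rw [key] at h
  have h2 : (Monoid.Coprod.inl : G₁ →* G₁ ∗ G₂) ((φ₁ ^ m) x * x⁻¹)
      ∈ powSubgroup (G₁ ∗ G₂) n := by
    simpa using h
  have h3 := powSubgroup_map_le (Monoid.Coprod.fst : G₁ ∗ G₂ →* G₁) n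
    ⟨_, h2, rfl⟩
  simpa using h3
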